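/- Let ω, ψ, α, β, θ be real numbers and define R e^{iG} = cos(α+β) cosh ω + i sin(α+β) sinh ω and R^θ e^{iG^θ} = cos(α+β+θ) cosh ω + i sin(α+β+θ) sinh ω with R, R^θ > 0. Then tan(G^θ − G) = sinh(2ω) sin θ / (2 cos θ · R² − sin θ · sin(2(α+β))). -/
import Mathlib


open Real

lemma stmt9_extract (R G c s : ℝ)
    (h : (R : ℂ) * Complex.exp (Complex.I * (G : ℂ)) = (c : ℂ) + Complex.I * (s : ℂ)) :
    R * Real.cos G = c ∧ R * Real.sin G = s := by
  rw [mul_comm Complex.I] at h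
  constructor
  · have := congrArg Complex.re h; simpa using this
  · have := congrArg Complex.im h; simpa using this

/-- With `R e^{iG} = cos(α+β)cosh ω + i sin(α+β)sinh ω` and
`R^θ e^{iG^θ} = cos(α+β+θ)cosh ω + i sin(α+β+θ)sinh ω` (`R, R^θ > 0`), one has
`tan(G^θ - G) = sinh(2ω) sin θ / (2 cos θ R² - sin θ sin(2(α+β)))`. -/
theorem stmt9 (ω ψ α β θ R G Rθ Gθ : ℝ) (hR : 0 < R) (hRθ : 0 < Rθ)
    (h1 : (R : ℂ) * Complex.exp (Complex.I * (G : ℂ))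
      = ((Real.cos (α + β) * Real.cosh ω : ℝ) : ℂ)
        + Complex.I * ((Real.sin (α + β) * Real.sinh ω : ℝ) : ℂ))
    (h2 : (Rθ : ℂ) * Complex.exp (Complex.I * (Gθ : ℂ))
      = ((Real.cos (α + β + θ) * Real.cosh ω : ℝ) : ℂ)
        + Complex.I * ((Real.sin (α + β + θ) * Real.sinh ω : ℝ) : ℂ))
    (hden : 2 * Real.cos θ * R^2 - Real.sin θ * Real.sin (2 * (α + β)) ≠ 0) :
    Real.tan (Gθ - G)
      = Real.sinh (2 * ω) * Real.sin θ
        / (2 * Real.cos θ * R^2 - Real.sin θ * Real.sin (2 * (α + β))) := by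
  obtain ⟨hc1, hs1⟩ := stmt9_extract R G _ _ h1
  obtain ⟨hc2, hs2⟩ := stmt9_extract Rθ Gθ _ _ h2
  have hpyth : Real.cos (α + β) ^ 2 + Real.sin (α + β) ^ 2 = 1 := by
    rw [add_comm]; exact Real.sin_sq_add_cos_sq _
  have hG : Real.sin G ^ 2 + Real.cos G ^ 2 = 1 := Real.sin_sq_add_cos_sq G
  have hR2 : R ^ 2 = (Real.cos (α + β) * Real.cosh ω) ^ 2
      + (Real.sin (α + β) * Real.sinh ω) ^ 2 := by
    rw [← hc1, ← hs1]; linear_combination (-(R^2)) * hG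
  have hcosθ : Real.cos (α + β + θ) = Real.cos (α + β) * Real.cos θ
      - Real.sin (α + β) * Real.sin θ := Real.cos_add _ _
  have hsinθ : Real.sin (α + β + θ) = Real.sin (α + β) * Real.cos θ
      + Real.cos (α + β) * Real.sin θ := Real.sin_add _ _
  have hhyp : Real.cosh ω ^ 2 - Real.sinh ω ^ 2 = 1 := Real.cosh_sq_sub_sinh_sq ω
  have hsin2 : Real.sin (2 * (α + β)) = 2 * Real.sin (α + β) * Real.cos (α + β) :=
    Real.sin_two_mul _
  have hsinh2 : Real.sinh (2 * ω) = 2 * Real.sinh ω * Real.cosh ω :=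
    Real.sinh_two_mul _
  set D := 2 * Real.cos θ * R ^ 2 - Real.sin θ * Real.sin (2 * (α + β)) with hD
  have hcosd : Rθ * R * Real.cos (Gθ - G) = D / 2 := by
    rw [Real.cos_sub]
    have e : Rθ * R * (Real.cos Gθ * Real.cos G + Real.sin Gθ * Real.sin G)
        = (Rθ * Real.cos Gθ) * (R * Real.cos G) + (Rθ * Real.sin Gθ) * (R * Real.sin G) := by
      ring
    rw [e, hc1, hs1, hc2, hs2, hD, hR2, hsin2, hcosθ, hsinθ]
    linear_combination (-(Real.sin θ * Real.sin (α + β) * Real.cos (α + β))) * hhyp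
  have hsind : Rθ * R * Real.sin (Gθ - G) = Real.sinh (2 * ω) * Real.sin θ / 2 := by
    rw [Real.sin_sub]
    have e : Rθ * R * (Real.sin Gθ * Real.cos G - Real.cos Gθ * Real.sin G)
        = (Rθ * Real.sin Gθ) * (R * Real.cos G) - (Rθ * Real.cos Gθ) * (R * Real.sin G) := by
      ring
    rw [e, hc1, hs1, hc2, hs2, hsinh2, hcosθ, hsinθ]
    linear_combination (Real.sin θ * Real.sinh ω * Real.cosh ω) * hpyth
  have hRR : Rθ * R ≠ 0 := by positivity
  have hcosne : Real.cos (Gθ - G) ≠ 0 := by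
    intro h
    apply hden
    rw [h, mul_zero] at hcosd
    linarith
  rw [Real.tan_eq_sin_div_cos]
  have key : Real.sin (Gθ - G) * D = Real.sinh (2 * ω) * Real.sin θ * Real.cos (Gθ - G) := by
    have e1 : Rθ * R * (Real.sin (Gθ - G) * D)
        = Rθ * R * (Real.sinh (2 * ω) * Real.sin θ * Real.cos (Gθ - G)) := by
      calc Rθ * R * (Real.sin (Gθ - G) * D) = (Rθ * R * Real.sin (Gθ - G)) * D := by ring
        _ = (Real.sinh (2 * ω) * Real.sin θ / 2) * D := by rw [hsind]
        _ = Real.sinh (2 * ω) * Real.sin θ * (D / 2) := by ring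
        _ = Real.sinh (2 * ω) * Real.sin θ * (Rθ * R * Real.cos (Gθ - G)) := by rw [hcosd]
        _ = Rθ * R * (Real.sinh (2 * ω) * Real.sin θ * Real.cos (Gθ - G)) := by ring
    exact mul_left_cancel₀ hRR e1
  field_simp
  linarith [key]
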